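/- Let (eₙ) be the standard basis of ℓ¹(ℕ), Y a Banach space, T : ℓ¹ → Y a bounded operator, ε ∈ (0,1), and I ⊆ ℕ a nonempty proper subset such that ‖Teᵢ‖ is constant for i ∈ I and ‖Te_{i₀}‖ > ‖T‖ − ε‖T‖/2 for some i₀ ∈ I. Let P : ℓ¹ → ℓ¹ be the coordinate projection onto the coordinates in I, and set S = T + ε·(T ∘ P). Then ‖S − T‖ ≤ ε‖T‖, and S attains its norm at e_{i₀}. -/

import Mathlib

/-- The standard basis vectors of `ℓ¹(ℕ)`. -/
noncomputable def e (n : ℕ) : lp (fun _ : ℕ => ℝ) 1 := lp.single 1 n (1 : ℝ)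

lemma hasSum_norm1 (x : lp (fun _ : ℕ => ℝ) 1) :
    HasSum (fun i => ‖(x : ∀ _ : ℕ, ℝ) i‖) ‖x‖ := by
  simpa using lp.hasSum_norm (by norm_num : (0:ℝ) < ENNReal.toReal 1) x

lemma opNorm_le_of_basis {Y : Type*} [NormedAddCommGroup Y] [NormedSpace ℝ Y]
    (R : lp (fun _ : ℕ => ℝ) 1 →L[ℝ] Y) (C : ℝ) (hC : 0 ≤ C)
    (h : ∀ n, ‖R (e n)‖ ≤ C) : ‖R‖ ≤ C := by
  refine R.opNorm_le_bound hC fun x => ?_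
  have h1 := hasSum_norm1 x
  have h2 : HasSum (fun i => R (lp.single 1 i ((x : ∀ _ : ℕ, ℝ) i))) (R x) :=
    (lp.hasSum_single (by norm_num) x).mapL R
  have h3 : ∀ i, lp.single 1 i ((x : ∀ _ : ℕ, ℝ) i) = (x : ∀ _ : ℕ, ℝ) i • e i := by
    intro i
    rw [e, ← lp.single_smul]
    norm_num
  have hb : ∀ i, ‖R (lp.single 1 i ((x : ∀ _ : ℕ, ℝ) i))‖ ≤ C * ‖(x : ∀ _ : ℕ, ℝ) i‖ := by
    intro i
    rw [h3, map_smul, norm_smul]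
    calc ‖(x : ∀ _ : ℕ, ℝ) i‖ * ‖R (e i)‖ ≤ ‖(x : ∀ _ : ℕ, ℝ) i‖ * C :=
          mul_le_mul_of_nonneg_left (h i) (norm_nonneg _)
      _ = C * ‖(x : ∀ _ : ℕ, ℝ) i‖ := mul_comm _ _
  have hsum : Summable fun i => ‖R (lp.single 1 i ((x : ∀ _ : ℕ, ℝ) i))‖ :=
    Summable.of_nonneg_of_le (fun i => norm_nonneg _) hb (h1.summable.mul_left C)
  calc ‖R x‖ = ‖∑' i, R (lp.single 1 i ((x : ∀ _ : ℕ, ℝ) i))‖ := by rw [h2.tsum_eq]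
    _ ≤ ∑' i, ‖R (lp.single 1 i ((x : ∀ _ : ℕ, ℝ) i))‖ := norm_tsum_le_tsum_norm hsum
    _ ≤ ∑' i, C * ‖(x : ∀ _ : ℕ, ℝ) i‖ := Summable.tsum_le_tsum hb hsum (h1.summable.mul_left C)
    _ = C * ‖x‖ := (h1.mul_left C).tsum_eq

lemma norm_e (n : ℕ) : ‖e n‖ = 1 := by
  have := lp.norm_single (E := fun _ : ℕ => ℝ) (by norm_num : (0:ENNReal) < 1) n (1:ℝ)
  simpa [e] using this


/-- given `T : ℓ¹ → Y`, `ε ∈ (0,1)`, a nonempty proper set `I ⊆ ℕ` on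
which `‖T eᵢ‖` is constant with `‖T e_{i₀}‖ > ‖T‖ - ε‖T‖/2` for some `i₀ ∈ I`, and `P`
the coordinate projection onto `I`, the perturbation `S = T + ε (T ∘ P)` satisfies
`‖S - T‖ ≤ ε ‖T‖` and attains its norm at `e_{i₀}`. -/
theorem stmt18 {Y : Type*} [NormedAddCommGroup Y] [NormedSpace ℝ Y] [CompleteSpace Y]
    (T : lp (fun _ : ℕ => ℝ) 1 →L[ℝ] Y)
    (ε : ℝ) (hε : 0 < ε) (hε1 : ε < 1)
    (I : Set ℕ) (hIne : I.Nonempty) (hIprop : I ≠ Set.univ)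
    (hconst : ∀ i ∈ I, ∀ j ∈ I, ‖T (e i)‖ = ‖T (e j)‖)
    (i₀ : ℕ) (hi₀ : i₀ ∈ I)
    (hbig : ‖T (e i₀)‖ > ‖T‖ - ε * ‖T‖ / 2)
    (P : lp (fun _ : ℕ => ℝ) 1 →L[ℝ] lp (fun _ : ℕ => ℝ) 1)
    (hP : ∀ (x : lp (fun _ : ℕ => ℝ) 1) (i : ℕ),
      (P x : ∀ _ : ℕ, ℝ) i = Set.indicator I (fun j => (x : ∀ _ : ℕ, ℝ) j) i) :
    ‖(T + ε • (T.comp P)) - T‖ ≤ ε * ‖T‖ ∧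
    ‖(T + ε • (T.comp P)) (e i₀)‖ = ‖T + ε • (T.comp P)‖ := by
  -- P is norm-nonincreasing
  have hPnorm : ∀ x, ‖P x‖ ≤ ‖x‖ := by
    intro x
    refine hasSum_le (fun i => ?_) (hasSum_norm1 (P x)) (hasSum_norm1 x)
    rw [hP]
    by_cases hiI : i ∈ I
    · rw [Set.indicator_of_mem hiI]
    · rw [Set.indicator_of_notMem hiI]
      simp
  -- P on basis vectors
  have hPe_mem : ∀ n ∈ I, P (e n) = e n := by
    intro n hn
    apply Subtype.ext
    funext i
    rw [hP]
    by_cases hiI : i ∈ I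
    · rw [Set.indicator_of_mem hiI]
    · rw [Set.indicator_of_notMem hiI]
      have : i ≠ n := fun h => hiI (h ▸ hn)
      exact (lp.single_apply_ne (E := fun _ : ℕ => ℝ) 1 n (1:ℝ) this).symm
  have hPe_not : ∀ n, n ∉ I → P (e n) = 0 := by
    intro n hn
    apply Subtype.ext
    funext i
    rw [hP]
    by_cases hiI : i ∈ I
    · rw [Set.indicator_of_mem hiI]
      have : i ≠ n := fun h => hn (h ▸ hiI)
      exact lp.single_apply_ne (E := fun _ : ℕ => ℝ) 1 n (1:ℝ) this
    · rw [Set.indicator_of_notMem hiI]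
      rfl
  have hTP : ‖T.comp P‖ ≤ ‖T‖ := by
    refine ContinuousLinearMap.opNorm_le_bound _ (norm_nonneg T) fun x => ?_
    calc ‖T (P x)‖ ≤ ‖T‖ * ‖P x‖ := T.le_opNorm _
      _ ≤ ‖T‖ * ‖x‖ := mul_le_mul_of_nonneg_left (hPnorm x) (norm_nonneg T)
  have part1 : ‖(T + ε • (T.comp P)) - T‖ ≤ ε * ‖T‖ := by
    have : (T + ε • (T.comp P)) - T = ε • (T.comp P) := by abel
    rw [this]
    refine ContinuousLinearMap.opNorm_le_bound _ (by positivity) fun x => ?_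
    have : (ε • T.comp P) x = ε • T (P x) := rfl
    rw [this, norm_smul, Real.norm_of_nonneg hε.le, mul_assoc]
    refine mul_le_mul_of_nonneg_left ?_ hε.le
    calc ‖T (P x)‖ ≤ ‖T‖ * ‖P x‖ := T.le_opNorm _
      _ ≤ ‖T‖ * ‖x‖ := mul_le_mul_of_nonneg_left (hPnorm x) (norm_nonneg T)
  refine ⟨part1, ?_⟩
  set c := ‖T (e i₀)‖ with hc
  have hc_le : c ≤ ‖T‖ := by
    have := T.le_opNorm (e i₀)
    rwa [norm_e, mul_one] at this
  have hc_nonneg : (0:ℝ) ≤ c := norm_nonneg _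
  have hT1 : ‖T‖ ≤ (1 + ε) * c := by nlinarith [norm_nonneg T]
  have hS_mem : ∀ n ∈ I, ‖(T + ε • (T.comp P)) (e n)‖ = (1 + ε) * c := by
    intro n hn
    have : (T + ε • (T.comp P)) (e n) = (1 + ε) • T (e n) := by
      simp [ContinuousLinearMap.add_apply, ContinuousLinearMap.smul_apply,
        ContinuousLinearMap.comp_apply, hPe_mem n hn, add_smul, one_smul]
    rw [this, norm_smul, Real.norm_of_nonneg (by linarith), hconst n hn i₀ hi₀]
  have hSle : ‖T + ε • (T.comp P)‖ ≤ (1 + ε) * c := by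
    refine opNorm_le_of_basis _ _ (by nlinarith) fun n => ?_
    by_cases hn : n ∈ I
    · exact le_of_eq (hS_mem n hn)
    · have : (T + ε • (T.comp P)) (e n) = T (e n) := by
        simp [ContinuousLinearMap.add_apply, ContinuousLinearMap.smul_apply,
          ContinuousLinearMap.comp_apply, hPe_not n hn]
      rw [this]
      calc ‖T (e n)‖ ≤ ‖T‖ * ‖e n‖ := T.le_opNorm _
        _ = ‖T‖ := by rw [norm_e, mul_one]
        _ ≤ (1 + ε) * c := hT1
  have hSe : ‖(T + ε • (T.comp P)) (e i₀)‖ = (1 + ε) * c := hS_mem i₀ hi₀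
  have hge : (1 + ε) * c ≤ ‖T + ε • (T.comp P)‖ := by
    have := (T + ε • (T.comp P)).le_opNorm (e i₀)
    rwa [hSe, norm_e, mul_one] at this
  rw [hSe]
  exact le_antisymm hge hSle
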